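/- Suppose n ≥ 2, the network is complete (g_{ij} = 1 for all i ≠ j), and fix any integer n_t with 0 ≤ n_t < n. Let p be a mixture, with strictly positive mixing weights, of the uniform completely randomized design with exactly n_t treated units and the uniform completely randomized design with exactly n_t + 1 treated units (uniform over all subsets of the corresponding size). Then linear unbiased estimators of β̄ under SANIA exist: for each unit i there are allocations z, z′ in the support with z_i = 1, z′_i = 0, and d_i^z = d_i^{z′} = n_t. -/

import Mathlib

open Finset

/-- Treated degree of unit `i` under allocation `z`. -/
def trDeg {n : ℕ} (g : Fin n → Fin n → Bool) (z : Fin n → Bool) (i : Fin n) : ℕ :=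
  (Finset.univ.filter fun j => g j i = true ∧ z j = true).card

/-- Number of treated units under allocation `z`. -/
def numTreated {n : ℕ} (z : Fin n → Bool) : ℕ :=
  (Finset.univ.filter fun i => z i = true).card

lemma trDeg_complete {n : ℕ} (g : Fin n → Fin n → Bool) (hg : ∀ i, g i i = false)
    (hcomp : ∀ i j : Fin n, i ≠ j → g i j = true) (z : Fin n → Bool) (i : Fin n) :
    trDeg g z i = ((univ.filter fun j => z j = true).erase i).card := by
  unfold trDeg
  congr 1
  ext j
  by_cases hj : j = i
  · simp [hj, hg]
  · simp [hj, hcomp j i hj]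

lemma trDeg_of_true {n : ℕ} (g : Fin n → Fin n → Bool) (hg : ∀ i, g i i = false)
    (hcomp : ∀ i j : Fin n, i ≠ j → g i j = true) (z : Fin n → Bool) (i : Fin n)
    (h : z i = true) : trDeg g z i + 1 = numTreated z := by
  rw [trDeg_complete g hg hcomp, Finset.card_erase_add_one (by simp [h])]; rfl

lemma trDeg_of_false {n : ℕ} (g : Fin n → Fin n → Bool) (hg : ∀ i, g i i = false)
    (hcomp : ∀ i j : Fin n, i ≠ j → g i j = true) (z : Fin n → Bool) (i : Fin n)
    (h : z i = false) : trDeg g z i = numTreated z := by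
  rw [trDeg_complete g hg hcomp, Finset.erase_eq_of_notMem (by simp [h])]; rfl

lemma card_E1_eq_card_E0 (n nt : ℕ) (i : Fin n) :
    (univ.filter fun z : Fin n → Bool => z i = true ∧ numTreated z = nt + 1).card
      = (univ.filter fun z : Fin n → Bool => z i = false ∧ numTreated z = nt).card := by
  refine Finset.card_bij' (fun z _ => Function.update z i false)
    (fun z _ => Function.update z i true) ?_ ?_ ?_ ?_
  · intro z hz
    simp only [mem_filter, mem_univ, true_and] at hz ⊢
    refine ⟨by simp, ?_⟩
    have h : numTreated (Function.update z i false) + 1 = numTreated z := by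
      unfold numTreated
      have hset : (univ.filter fun j => Function.update z i false j = true)
          = (univ.filter fun j => z j = true).erase i := by
        ext j; by_cases hj : j = i <;> simp [hj, Function.update, hz.1]
      rw [hset, Finset.card_erase_add_one (by simp [hz.1])]
    omega
  · intro z hz
    simp only [mem_filter, mem_univ, true_and] at hz ⊢
    refine ⟨by simp, ?_⟩
    have hset : (univ.filter fun j => Function.update z i true j = true)
        = insert i (univ.filter fun j => z j = true) := by
      ext j; by_cases hj : j = i <;> simp [hj, Function.update]
    unfold numTreated
    rw [hset, Finset.card_insert_of_notMem (by simp [hz.1])]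
    exact congrArg (· + 1) hz.2
  · intro z hz
    simp only [mem_filter, mem_univ, true_and] at hz
    show Function.update (Function.update z i false) i true = z
    rw [Function.update_idem, ← hz.1, Function.update_eq_self]
  · intro z hz
    simp only [mem_filter, mem_univ, true_and] at hz
    show Function.update (Function.update z i true) i false = z
    rw [Function.update_idem, ← hz.1, Function.update_eq_self]

theorem stmt_12 (n : ℕ) (hn : 2 ≤ n) (nt : ℕ) (hnt : nt < n)
    (g : Fin n → Fin n → Bool) (hg : ∀ i, g i i = false)
    (hcomp : ∀ i j : Fin n, i ≠ j → g i j = true)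
    (q₁ q₂ : ℝ) (hq₁ : 0 < q₁) (hq₂ : 0 < q₂) (hq : q₁ + q₂ = 1)
    (p : (Fin n → Bool) → ℝ)
    (hp : ∀ z, p z =
      q₁ * (if numTreated z = nt then (1 : ℝ) / (n.choose nt) else 0) +
      q₂ * (if numTreated z = nt + 1 then (1 : ℝ) / (n.choose (nt + 1)) else 0)) :
    (∀ i : Fin n, ∃ z z' : Fin n → Bool,
      0 < p z ∧ 0 < p z' ∧ z i = true ∧ z' i = false ∧
      trDeg g z i = nt ∧ trDeg g z' i = nt) ∧
    (∃ w : Fin n → (Fin n → Bool) → ℝ,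
      ∀ (α β : Fin n → ℝ) (Γ : Fin n → ℕ → ℝ), (∀ i, Γ i 0 = 0) →
        ∑ z, p z * ∑ i, w i z *
            (α i + β i * (if z i then (1 : ℝ) else 0) + Γ i (trDeg g z i))
          = (1 / (n : ℝ)) * ∑ i, β i) := by
  classical
  have hC1 : 0 < n.choose (nt + 1) := Nat.choose_pos hnt
  have hC0 : 0 < n.choose nt := Nat.choose_pos hnt.le
  have hC1R : (0 : ℝ) < (n.choose (nt + 1) : ℝ) := by exact_mod_cast hC1
  have hC0R : (0 : ℝ) < (n.choose nt : ℝ) := by exact_mod_cast hC0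
  have hnR : (0 : ℝ) < (n : ℝ) := by positivity
  -- positivity of p on the two relevant events
  have hp1 : ∀ z : Fin n → Bool, numTreated z = nt + 1 →
      p z = q₂ * (1 / (n.choose (nt + 1))) := by
    intro z hz
    rw [hp z, hz, if_neg (by omega), if_pos rfl, mul_zero, zero_add]
  have hp0 : ∀ z : Fin n → Bool, numTreated z = nt →
      p z = q₁ * (1 / (n.choose nt)) := by
    intro z hz
    rw [hp z, hz, if_pos rfl, if_neg (by omega), mul_zero, add_zero]
  -- key existence lemma
  have key : ∀ i : Fin n, ∃ z z' : Fin n → Bool,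
      z i = true ∧ z' i = false ∧ numTreated z = nt + 1 ∧ numTreated z' = nt := by
    intro i
    have hcard : nt ≤ (univ.erase i).card := by
      rw [Finset.card_erase_of_mem (mem_univ i), card_univ, Fintype.card_fin]; omega
    obtain ⟨s, hs_sub, hs_card⟩ := Finset.exists_subset_card_eq hcard
    have his : i ∉ s := fun h => (Finset.mem_erase.mp (hs_sub h)).1 rfl
    refine ⟨fun j => decide (j = i ∨ j ∈ s), fun j => decide (j ∈ s), by simp, by simp [his],
      ?_, ?_⟩
    · show numTreated (fun j => decide (j = i ∨ j ∈ s)) = nt + 1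
      unfold numTreated
      have : (univ.filter fun j : Fin n => decide (j = i ∨ j ∈ s) = true) = insert i s := by
        ext j; simp [Finset.mem_insert]
      rw [this, Finset.card_insert_of_notMem his, hs_card]
    · show numTreated (fun j => decide (j ∈ s)) = nt
      unfold numTreated
      have : (univ.filter fun j : Fin n => decide (j ∈ s) = true) = s := by
        ext j; simp
      rw [this, hs_card]
  constructor
  · -- part 1
    intro i
    obtain ⟨z, z', hz1, hz'0, hN1, hN0⟩ := key i
    refine ⟨z, z', ?_, ?_, hz1, hz'0, ?_, ?_⟩
    · rw [hp1 z hN1]; positivity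
    · rw [hp0 z' hN0]; positivity
    · have := trDeg_of_true g hg hcomp z i hz1; omega
    · rw [trDeg_of_false g hg hcomp z' i hz'0, hN0]
  · -- part 2
    set M : Fin n → ℕ := fun i =>
      (univ.filter fun z : Fin n → Bool => z i = true ∧ numTreated z = nt + 1).card with hM
    have hMpos : ∀ i, 0 < M i := by
      intro i
      obtain ⟨z, _, hz1, _, hN1, _⟩ := key i
      exact Finset.card_pos.mpr ⟨z, by simp [hz1, hN1]⟩
    have hMR : ∀ i, (0 : ℝ) < (M i : ℝ) := fun i => by exact_mod_cast hMpos i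
    refine ⟨fun i z =>
      if z i = true ∧ numTreated z = nt + 1 then
        (n.choose (nt + 1) : ℝ) / (q₂ * (M i) * n)
      else if z i = false ∧ numTreated z = nt then
        -((n.choose nt : ℝ) / (q₁ * (M i) * n))
      else 0, ?_⟩
    intro α β Γ hΓ
    simp_rw [Finset.mul_sum]
    rw [Finset.sum_comm]
    have inner : ∀ i : Fin n, ∑ z : Fin n → Bool,
        p z * ((if z i = true ∧ numTreated z = nt + 1 then
            (n.choose (nt + 1) : ℝ) / (q₂ * (M i) * n)
          else if z i = false ∧ numTreated z = nt then
            -((n.choose nt : ℝ) / (q₁ * (M i) * n))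
          else 0) *
          (α i + β i * (if z i then (1 : ℝ) else 0) + Γ i (trDeg g z i)))
        = β i / n := by
      intro i
      set c1 : ℝ := q₂ * (1 / (n.choose (nt + 1))) *
        ((n.choose (nt + 1) : ℝ) / (q₂ * (M i) * n)) * (α i + β i + Γ i nt) with hc1
      set c0 : ℝ := q₁ * (1 / (n.choose nt)) *
        (-((n.choose nt : ℝ) / (q₁ * (M i) * n))) * (α i + Γ i nt) with hc0
      have hpt : ∀ z : Fin n → Bool,
          p z * ((if z i = true ∧ numTreated z = nt + 1 then
              (n.choose (nt + 1) : ℝ) / (q₂ * (M i) * n)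
            else if z i = false ∧ numTreated z = nt then
              -((n.choose nt : ℝ) / (q₁ * (M i) * n))
            else 0) *
            (α i + β i * (if z i then (1 : ℝ) else 0) + Γ i (trDeg g z i)))
          = (if z i = true ∧ numTreated z = nt + 1 then c1 else 0)
            + (if z i = false ∧ numTreated z = nt then c0 else 0) := by
        intro z
        by_cases h1 : z i = true ∧ numTreated z = nt + 1
        · have ht : trDeg g z i = nt := by
            have := trDeg_of_true g hg hcomp z i h1.1; omega
          have hno : ¬ (z i = false ∧ numTreated z = nt) := by
            rintro ⟨hf, -⟩; rw [h1.1] at hf; exact Bool.noConfusion hf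
          rw [if_pos h1, if_pos h1, if_neg hno, hp1 z h1.2, ht, h1.1, if_pos rfl]
          rw [hc1]; ring
        · rw [if_neg h1, if_neg h1, zero_add]
          by_cases h0 : z i = false ∧ numTreated z = nt
          · have ht : trDeg g z i = nt := by
              rw [trDeg_of_false g hg hcomp z i h0.1, h0.2]
            rw [if_pos h0, if_pos h0, hp0 z h0.2, ht, h0.1, if_neg (by simp)]
            rw [hc0]; ring
          · rw [if_neg h0, if_neg h0, zero_mul, mul_zero]
      rw [Finset.sum_congr rfl (fun z _ => hpt z)]
      rw [Finset.sum_add_distrib, ← Finset.sum_filter, ← Finset.sum_filter,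
        Finset.sum_const, Finset.sum_const, nsmul_eq_mul, nsmul_eq_mul,
        ← card_E1_eq_card_E0 n nt i]
      rw [hc1, hc0]
      have hMne : ((univ.filter fun z : Fin n → Bool =>
          z i = true ∧ numTreated z = nt + 1).card : ℝ) ≠ 0 := (hMR i).ne'
      have hq1ne : q₁ ≠ 0 := hq₁.ne'
      have hq2ne : q₂ ≠ 0 := hq₂.ne'
      have hC1ne : (n.choose (nt + 1) : ℝ) ≠ 0 := hC1R.ne'
      have hC0ne : (n.choose nt : ℝ) ≠ 0 := hC0R.ne'
      have hnne : (n : ℝ) ≠ 0 := hnR.ne'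
      rw [show (M i : ℝ) = ((univ.filter fun z : Fin n → Bool =>
          z i = true ∧ numTreated z = nt + 1).card : ℝ) from rfl]
      field_simp
      ring
    rw [Finset.sum_congr rfl (fun i _ => inner i)]
    exact Finset.sum_congr rfl fun i _ => by rw [div_eq_mul_inv, one_div, mul_comm]
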